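/- arXiv:0711.2658 — 5 statements merged into one kernel-verified Lean document; each statement's English description precedes it below -/
import Mathlib

section
/- Every linear bijection W from a finite-dimensional real inner product space V onto a subspace of ℝ^Γ (Γ finite) is a frame representation: there exists a unique family F : Γ → V such that W(A)(α) = ⟨F(α), A⟩ for all A and α, and this family F is a frame for V. -/
theorem stmt4 {V : Type*} [NormedAddCommGroup V] [InnerProductSpace ℝ V]
    [FiniteDimensional ℝ V] {Γ : Type*} [Fintype Γ]
    (W : V →ₗ[ℝ] (Γ → ℝ)) (hW : Function.Injective W) :
    (∃! F : Γ → V, ∀ (A : V) (α : Γ), W A α = (inner ℝ (F α) A : ℝ)) ∧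
    (∀ F : Γ → V, (∀ (A : V) (α : Γ), W A α = (inner ℝ (F α) A : ℝ)) →
      Submodule.span ℝ (Set.range F) = ⊤) := by
  have spanprop : ∀ F : Γ → V, (∀ (A : V) (α : Γ), W A α = (inner ℝ (F α) A : ℝ)) →
      Submodule.span ℝ (Set.range F) = ⊤ := by
    intro F hF
    rw [← Submodule.orthogonal_eq_bot_iff]
    rw [Submodule.eq_bot_iff]
    intro A hA
    apply hW
    rw [map_zero]
    funext α
    rw [hF A α]
    simp only [Pi.zero_apply]
    exact (Submodule.mem_orthogonal _ _).1 hA (F α) (Submodule.subset_span ⟨α, rfl⟩)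
  refine ⟨?_, spanprop⟩
  set F : Γ → V := fun α =>
    (InnerProductSpace.toDual ℝ V).symm
      (LinearMap.toContinuousLinearMap ((LinearMap.proj α).comp W)) with hFdef
  refine ⟨F, ?_, ?_⟩
  · intro A α
    have := InnerProductSpace.toDual_symm_apply (E := V) (𝕜 := ℝ)
      (x := A) (y := LinearMap.toContinuousLinearMap ((LinearMap.proj α).comp W))
    simp only [hFdef]
    simpa using this.symm
  · intro G hG
    funext α
    have h : ∀ A : V, (inner ℝ (G α) A : ℝ) = inner ℝ (F α) A := by
      intro A
      rw [← hG A α]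
      have := InnerProductSpace.toDual_symm_apply (E := V) (𝕜 := ℝ)
        (x := A) (y := LinearMap.toContinuousLinearMap ((LinearMap.proj α).comp W))
      simp only [hFdef]
      simpa using this
    have : G α - F α = 0 := by
      have h2 : (inner ℝ (G α - F α) (G α - F α) : ℝ) = 0 := by
        rw [inner_sub_left, h]; ring
      exact inner_self_eq_zero.mp h2
    exact sub_eq_zero.mp this
end

section
/- Let d ≥ 2. There do not exist finite families F, E : Γ → Hermitian d×d matrices with F(α) and E(α) positive semidefinite for all α, such that for every d×d complex matrix A one has A = Σ_α tr(F(α) A) E(α). That is, no frame of positive semidefinite operators admits a dual frame consisting of positive semidefinite operators. -/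
open ComplexOrder

lemma psd_diag_nonneg {d : ℕ} {M : Matrix (Fin d) (Fin d) ℂ} (h : M.PosSemidef) (i : Fin d) :
    0 ≤ M i i := by
  exact h.diag_nonneg

lemma psd_offdiag_zero {d : ℕ} {M : Matrix (Fin d) (Fin d) ℂ} (h : M.PosSemidef) (i j : Fin d)
    (hz : M i i = 0) : M i j = 0 := by
  obtain ⟨B, rfl⟩ : ∃ B : Matrix (Fin d) (Fin d) ℂ, M = star B * B := by
    open scoped MatrixOrder in
    exact CStarAlgebra.nonneg_iff_eq_star_mul_self.mp h.nonneg
  have hcol : ∀ k, B k i = 0 := by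
    have h1 : ∑ k, ((Complex.normSq (B k i) : ℝ) : ℂ) = 0 := by
      rw [← hz]
      simp [Matrix.mul_apply, Matrix.conjTranspose_apply, Complex.normSq_eq_conj_mul_self]
    have h2 : ∑ k, (Complex.normSq (B k i) : ℝ) = 0 := by
      exact_mod_cast h1
    intro k
    have := (Finset.sum_eq_zero_iff_of_nonneg (fun k _ => Complex.normSq_nonneg _)).mp h2 k
      (Finset.mem_univ k)
    exact Complex.normSq_eq_zero.mp this
  simp [Matrix.mul_apply, Matrix.conjTranspose_apply, hcol]

lemma trace_mul_single {d : ℕ} (M : Matrix (Fin d) (Fin d) ℂ) (i j : Fin d) :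
    Matrix.trace (M * Matrix.single j i 1) = M i j := by
  simp [Matrix.trace, Matrix.diag, Matrix.mul_apply, Matrix.single,
    Finset.sum_ite_eq, ite_and]

theorem stmt6 {d : ℕ} (hd : 2 ≤ d) {Γ : Type*} [Fintype Γ] :
    ¬ ∃ F E : Γ → Matrix (Fin d) (Fin d) ℂ,
        (∀ α, (F α).PosSemidef) ∧ (∀ α, (E α).PosSemidef) ∧
        ∀ A : Matrix (Fin d) (Fin d) ℂ,
          A = ∑ α, Matrix.trace (F α * A) • E α := by
  rintro ⟨F, E, hF, hE, hrec⟩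
  set i : Fin d := ⟨0, by omega⟩ with hi
  set j : Fin d := ⟨1, by omega⟩ with hj
  have hij : j ≠ i := by simp [hi, hj, Fin.ext_iff]
  -- first: ∀ α, F α i i * E α j j = 0
  have eq1 := congrFun (congrFun (hrec (Matrix.single i i 1)) j) j
  rw [show Matrix.single i i (1:ℂ) j j = if i = j ∧ i = j then 1 else 0 from rfl] at eq1
  simp only [Matrix.sum_apply, Matrix.smul_apply, trace_mul_single, smul_eq_mul] at eq1
  rw [if_neg (by simpa using hij.symm)] at eq1
  have hterm : ∀ α ∈ Finset.univ, F α i i * E α j j = 0 := by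
    have hnn : ∀ α ∈ (Finset.univ : Finset Γ), 0 ≤ F α i i * E α j j := fun α _ =>
      mul_nonneg (psd_diag_nonneg (hF α) i) (psd_diag_nonneg (hE α) j)
    exact (Finset.sum_eq_zero_iff_of_nonneg hnn).mp eq1.symm
  -- second: 1 = ∑ α, F α i j * E α j i
  have eq2 := congrFun (congrFun (hrec (Matrix.single j i 1)) j) i
  rw [show Matrix.single j i (1:ℂ) j i = if j = j ∧ i = i then 1 else 0 from rfl] at eq2
  simp only [Matrix.sum_apply, Matrix.smul_apply, trace_mul_single, smul_eq_mul] at eq2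
  rw [if_pos (by simp)] at eq2
  have : ∀ α ∈ (Finset.univ : Finset Γ), F α i j * E α j i = 0 := by
    intro α _
    rcases mul_eq_zero.mp (hterm α (Finset.mem_univ α)) with h | h
    · rw [psd_offdiag_zero (hF α) i j h, zero_mul]
    · rw [psd_offdiag_zero (hE α) j i h, mul_zero]
  rw [Finset.sum_eq_zero this] at eq2
  exact one_ne_zero eq2
end

section
/- Let d be an odd prime, X and Z the generalized Pauli (shift and clock) operators on ℂ^d, and P the parity operator Pφ_k = φ_{−k}. Then the d² operators F(q,p) = (1/d²) X^{2q} Z^{2p} P e^{4πiqp/d}, for (q,p) ∈ ℤ_d × ℤ_d, are Hermitian and pairwise orthogonal with respect to the trace inner product; in particular they form an orthogonal basis of the real space of Hermitian d×d matrices. -/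
noncomputable section

open Matrix

/-- The shift (generalized Pauli X) operator: `X φ_k = φ_{k+1}`. -/
def pauliX (d : ℕ) [NeZero d] : Matrix (ZMod d) (ZMod d) ℂ :=
  Matrix.of fun k l => if k = l + 1 then 1 else 0

/-- The clock (generalized Pauli Z) operator: `Z φ_k = ω^k φ_k`, `ω = e^{2πi/d}`. -/
def pauliZ (d : ℕ) [NeZero d] : Matrix (ZMod d) (ZMod d) ℂ :=
  Matrix.diagonal fun k => Complex.exp (2 * Real.pi * Complex.I * k.val / d)

/-- The parity operator: `P φ_k = φ_{-k}`. -/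
def parityP (d : ℕ) [NeZero d] : Matrix (ZMod d) (ZMod d) ℂ :=
  Matrix.of fun k l => if k = -l then 1 else 0

/-- The Wootters frame `F(q,p) = (1/d²) X^{2q} Z^{2p} P e^{4πiqp/d}`. -/
def woottersF (d : ℕ) [NeZero d] (q p : ZMod d) : Matrix (ZMod d) (ZMod d) ℂ :=
  (((d : ℂ) ^ 2)⁻¹ * Complex.exp (4 * Real.pi * Complex.I * q.val * p.val / d)) •
    (pauliX d ^ (2 * q.val) * pauliZ d ^ (2 * p.val) * parityP d)

namespace Stmt13Aux

variable (d : ℕ) [NeZero d]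

/-- The character `E x = e^{2πi x/d}` for `x : ZMod d`. -/
def E (x : ZMod d) : ℂ := Complex.exp (2 * Real.pi * Complex.I * x.val / d)

lemma hd0 : (d : ℂ) ≠ 0 := Nat.cast_ne_zero.2 (NeZero.ne d)

lemma exp_mod (n : ℕ) :
    Complex.exp (2 * Real.pi * Complex.I * n / d) =
      Complex.exp (2 * Real.pi * Complex.I * ((n % d : ℕ) : ℂ) / d) := by
  have h1 : (n : ℂ) = ((n % d : ℕ) : ℂ) + d * ((n / d : ℕ) : ℂ) := by
    exact_mod_cast congrArg (Nat.cast : ℕ → ℂ) (Nat.mod_add_div n d).symm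
  have h3 : Complex.exp (((n / d : ℕ) : ℂ) * (2 * Real.pi * Complex.I)) = 1 := by
    have h := Complex.exp_int_mul_two_pi_mul_I ((n / d : ℕ) : ℤ)
    push_cast at h
    exact h
  have h2 : 2 * Real.pi * Complex.I * n / d =
      2 * Real.pi * Complex.I * ((n % d : ℕ) : ℂ) / d
        + ((n / d : ℕ) : ℂ) * (2 * Real.pi * Complex.I) := by
    rw [h1]
    field_simp [hd0 d]
  rw [h2, Complex.exp_add, h3, mul_one]

lemma E_natCast (n : ℕ) : E d (n : ZMod d) = Complex.exp (2 * Real.pi * Complex.I * n / d) := by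
  rw [E, ZMod.val_natCast]
  exact (exp_mod d n).symm

lemma E_zero : E d 0 = 1 := by simp [E]

lemma E_add (x y : ZMod d) : E d (x + y) = E d x * E d y := by
  have hx : x = ((x.val : ℕ) : ZMod d) := by simp [ZMod.natCast_val, ZMod.cast_id]
  have hy : y = ((y.val : ℕ) : ZMod d) := by simp [ZMod.natCast_val, ZMod.cast_id]
  rw [hx, hy, ← Nat.cast_add, E_natCast, E_natCast, E_natCast, ← Complex.exp_add]
  congr 1
  push_cast
  ring

lemma E_ne_zero (x : ZMod d) : E d x ≠ 0 := Complex.exp_ne_zero _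

lemma conj_E (x : ZMod d) : (starRingEnd ℂ) (E d x) = E d (-x) := by
  have h1 : E d (-x) * E d x = 1 := by rw [← E_add, neg_add_cancel, E_zero]
  have h2 : (starRingEnd ℂ) (E d x) * E d x = 1 := by
    rw [E, ← Complex.exp_conj, ← Complex.exp_add]
    rw [show (starRingEnd ℂ) (2 * Real.pi * Complex.I * (x.val : ℂ) / d)
          = -(2 * Real.pi * Complex.I * (x.val : ℂ) / d) by
        simp only [map_div₀, _root_.map_mul, Complex.conj_I, Complex.conj_ofReal, map_ofNat,
          Complex.conj_natCast]
        ring]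
    simp
  exact mul_right_cancel₀ (E_ne_zero d x) (h2.trans h1.symm)

lemma E_pow (x : ZMod d) (m : ℕ) : E d x ^ m = E d ((m : ZMod d) * x) := by
  induction m with
  | zero => simp [E_zero]
  | succ m ih =>
    rw [pow_succ, ih, ← E_add]
    congr 1
    push_cast
    ring

lemma sum_E_eq_zero (hp : d.Prime) : ∑ l : ZMod d, E d l = 0 := by
  have key : (∑ l : ZMod d, E d l) * E d 1 = ∑ l : ZMod d, E d l := by
    rw [Finset.sum_mul]
    simp_rw [← E_add]
    exact Fintype.sum_equiv (Equiv.addRight 1) _ _ (fun x => rfl)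
  have hE1 : E d 1 ≠ 1 := by
    have hprim := Complex.isPrimitiveRoot_exp d (NeZero.ne d)
    have h1 : E d 1 = Complex.exp (2 * Real.pi * Complex.I / d) := by
      have : ((1 : ℕ) : ZMod d) = (1 : ZMod d) := by push_cast; rfl
      rw [← this, E_natCast]
      norm_num
    rw [h1]
    exact hprim.ne_one hp.one_lt
  have h0 : (∑ l : ZMod d, E d l) * (E d 1 - 1) = 0 := by
    rw [mul_sub, key, mul_one, sub_self]
  rcases mul_eq_zero.1 h0 with h | h
  · exact h
  · exact absurd (sub_eq_zero.1 h) hE1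

lemma sum_E_mul_eq_zero (hp : d.Prime) (t : ZMod d) (ht : t ≠ 0) :
    ∑ l : ZMod d, E d (t * l) = 0 := by
  haveI : Fact d.Prime := ⟨hp⟩
  have h1 : ∑ l : ZMod d, E d (t * l) = ∑ l : ZMod d, E d l :=
    Fintype.sum_equiv (Equiv.mulLeft₀ t ht) _ _ (fun x => rfl)
  rw [h1]
  exact sum_E_eq_zero d hp

lemma pauliX_pow (m : ℕ) :
    pauliX d ^ m = Matrix.of fun k l => if k = l + (m : ZMod d) then 1 else 0 := by
  induction m with
  | zero =>
    ext k l
    simp [Matrix.one_apply, eq_comm]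
  | succ m ih =>
    rw [pow_succ, ih]
    ext k l
    rw [Matrix.mul_apply]
    have hterm : ∀ j : ZMod d,
        (Matrix.of fun k l => if k = l + (m : ZMod d) then (1:ℂ) else 0) k j * pauliX d j l
          = if j = l + 1 then (if k = j + (m : ZMod d) then (1:ℂ) else 0) else 0 := by
      intro j
      simp only [Matrix.of_apply, pauliX]
      rw [mul_ite, mul_one, mul_zero]
    simp_rw [hterm]
    rw [Finset.sum_ite_eq' Finset.univ (l + 1)]
    simp only [Finset.mem_univ, if_true, Matrix.of_apply]
    have : l + 1 + (m : ZMod d) = l + ((m + 1 : ℕ) : ZMod d) := by push_cast; ring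
    rw [this]

lemma pauliZ_pow (m : ℕ) :
    pauliZ d ^ m = Matrix.diagonal fun k => E d ((m : ZMod d) * k) := by
  have h : pauliZ d = Matrix.diagonal fun k => E d k := rfl
  rw [h, Matrix.diagonal_pow]
  have hfun : (fun k => E d k) ^ m = fun k => E d ((m : ZMod d) * k) := by
    funext k
    rw [Pi.pow_apply, E_pow]
  rw [hfun]

lemma woottersF_apply (q p k l : ZMod d) :
    woottersF d q p k l =
      if k = 2 * q - l then ((d : ℂ) ^ 2)⁻¹ * E d (2 * q * p - 2 * p * l) else 0 := by
  have h2q : ((2 * q.val : ℕ) : ZMod d) = 2 * q := by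
    push_cast [ZMod.natCast_val, ZMod.cast_id]
    ring
  have h2p : ((2 * p.val : ℕ) : ZMod d) = 2 * p := by
    push_cast [ZMod.natCast_val, ZMod.cast_id]
    ring
  have hscal : Complex.exp (4 * Real.pi * Complex.I * q.val * p.val / d)
      = E d (2 * q * p) := by
    have harg : 4 * Real.pi * Complex.I * (q.val : ℂ) * (p.val : ℂ) / d
        = 2 * Real.pi * Complex.I * ((2 * q.val * p.val : ℕ) : ℂ) / d := by
      push_cast; ring
    rw [harg, ← E_natCast]
    congr 1
    push_cast [ZMod.natCast_val, ZMod.cast_id]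
    ring
  rw [woottersF, Matrix.smul_apply, pauliX_pow, pauliZ_pow, h2q, h2p]
  rw [Matrix.mul_apply]
  have hterm : ∀ j : ZMod d,
      ((Matrix.of fun k l => if k = l + 2 * q then (1:ℂ) else 0) * Matrix.diagonal fun k => E d (2 * p * k)) k j
        * parityP d j l
      = if j = -l then (if k = j + 2 * q then (1:ℂ) else 0) * E d (2 * p * j) else 0 := by
    intro j
    rw [Matrix.mul_diagonal]
    simp only [Matrix.of_apply, parityP]
    rw [mul_ite, mul_one, mul_zero]
  simp_rw [hterm]
  rw [Finset.sum_ite_eq' Finset.univ (-l)]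
  simp only [Finset.mem_univ, if_true, Matrix.of_apply]
  rw [hscal]
  by_cases h : k = 2 * q - l
  · have h' : k = -l + 2 * q := by rw [h]; ring
    rw [if_pos h, if_pos h']
    have harg : (2 : ZMod d) * q * p + 2 * p * -l = 2 * q * p - 2 * p * l := by ring
    simp only [smul_eq_mul, one_mul]
    rw [mul_assoc, ← E_add, harg]
  · have h' : ¬ k = -l + 2 * q := fun hh => h (by rw [hh]; ring)
    rw [if_neg h, if_neg h']
    simp

lemma hermitian (q p : ZMod d) : (woottersF d q p).IsHermitian := by
  show (woottersF d q p)ᴴ = woottersF d q p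
  ext k l
  rw [Matrix.conjTranspose_apply, woottersF_apply, woottersF_apply]
  by_cases h : l = 2 * q - k
  · have hk : k = 2 * q - l := by rw [h]; ring
    rw [if_pos h, if_pos hk, Complex.star_def, _root_.map_mul, conj_E]
    congr 1
    · simp [map_inv₀, map_pow]
    · congr 1
      rw [h]
      ring
  · have hk : ¬ k = 2 * q - l := fun hh => h (by rw [hh]; ring)
    rw [if_neg h, if_neg hk, star_zero]

lemma two_ne (hp : d.Prime) (ho : Odd d) : (2 : ZMod d) ≠ 0 := by
  intro h
  have h2 : ((2 : ℕ) : ZMod d) = 0 := by exact_mod_cast h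
  rw [ZMod.natCast_eq_zero_iff] at h2
  have hd2 : d = 2 := (Nat.prime_dvd_prime_iff_eq hp Nat.prime_two).1 h2
  subst hd2
  rw [Nat.odd_iff] at ho
  norm_num at ho

lemma trace_eq (hp : d.Prime) (ho : Odd d) (q p q' p' : ZMod d) :
    Matrix.trace (woottersF d q p * woottersF d q' p') =
      if q = q' then
        ((d : ℂ) ^ 2)⁻¹ * ((d : ℂ) ^ 2)⁻¹ * E d (2 * q * p - 2 * q * p')
          * ∑ j : ZMod d, E d (2 * (p' - p) * j)
      else 0 := by
  haveI : Fact d.Prime := ⟨hp⟩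
  have h2 : (2 : ZMod d) ≠ 0 := two_ne d hp ho
  have htr : Matrix.trace (woottersF d q p * woottersF d q' p')
      = ∑ j : ZMod d, ∑ k : ZMod d, woottersF d q p k j * woottersF d q' p' j k := by
    rw [Matrix.trace]
    simp only [Matrix.diag_apply, Matrix.mul_apply]
    rw [Finset.sum_comm]
  have hinner : ∀ j : ZMod d, (∑ k : ZMod d, woottersF d q p k j * woottersF d q' p' j k)
      = (((d : ℂ) ^ 2)⁻¹ * E d (2 * q * p - 2 * p * j)) * woottersF d q' p' j (2 * q - j) := by
    intro j
    have ht : ∀ k : ZMod d, woottersF d q p k j * woottersF d q' p' j k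
        = if k = 2 * q - j then
            (((d : ℂ) ^ 2)⁻¹ * E d (2 * q * p - 2 * p * j)) * woottersF d q' p' j k
          else 0 := by
      intro k
      rw [woottersF_apply, ite_mul, zero_mul]
    simp_rw [ht]
    rw [Finset.sum_ite_eq' Finset.univ (2 * q - j)]
    simp
  rw [htr]
  simp_rw [hinner]
  by_cases hqq : q = q'
  · subst hqq
    rw [if_pos rfl]
    have hF' : ∀ j : ZMod d, woottersF d q p' j (2 * q - j)
        = ((d : ℂ) ^ 2)⁻¹ * E d (2 * q * p' - 2 * p' * (2 * q - j)) := by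
      intro j
      rw [woottersF_apply, if_pos (show j = 2 * q - (2 * q - j) by ring)]
    simp_rw [hF']
    have hcomb : ∀ j : ZMod d,
        (((d : ℂ) ^ 2)⁻¹ * E d (2 * q * p - 2 * p * j))
          * (((d : ℂ) ^ 2)⁻¹ * E d (2 * q * p' - 2 * p' * (2 * q - j)))
        = ((d : ℂ) ^ 2)⁻¹ * ((d : ℂ) ^ 2)⁻¹ * E d (2 * q * p - 2 * q * p')
            * E d (2 * (p' - p) * j) := by
      intro j
      have e1 : E d (2 * q * p - 2 * p * j) * E d (2 * q * p' - 2 * p' * (2 * q - j))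
          = E d (2 * q * p - 2 * q * p') * E d (2 * (p' - p) * j) := by
        rw [← E_add, ← E_add]
        congr 1
        ring
      calc (((d : ℂ) ^ 2)⁻¹ * E d (2 * q * p - 2 * p * j))
            * (((d : ℂ) ^ 2)⁻¹ * E d (2 * q * p' - 2 * p' * (2 * q - j)))
          = ((d : ℂ) ^ 2)⁻¹ * ((d : ℂ) ^ 2)⁻¹
              * (E d (2 * q * p - 2 * p * j) * E d (2 * q * p' - 2 * p' * (2 * q - j))) := by
            ring
        _ = ((d : ℂ) ^ 2)⁻¹ * ((d : ℂ) ^ 2)⁻¹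
              * (E d (2 * q * p - 2 * q * p') * E d (2 * (p' - p) * j)) := by rw [e1]
        _ = ((d : ℂ) ^ 2)⁻¹ * ((d : ℂ) ^ 2)⁻¹ * E d (2 * q * p - 2 * q * p')
              * E d (2 * (p' - p) * j) := by ring
    simp_rw [hcomb]
    rw [← Finset.mul_sum]
  · rw [if_neg hqq]
    have hF' : ∀ j : ZMod d, woottersF d q' p' j (2 * q - j) = 0 := by
      intro j
      rw [woottersF_apply, if_neg]
      intro hh
      apply hqq
      have h2' : (2 : ZMod d) * (q - q') = 0 := by linear_combination hh
      rcases mul_eq_zero.1 h2' with h0 | h0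
      · exact absurd h0 h2
      · exact sub_eq_zero.1 h0
    simp_rw [hF', mul_zero]
    simp

lemma trace_orth (hp : d.Prime) (ho : Odd d) (q p q' p' : ZMod d)
    (h : (q, p) ≠ (q', p')) :
    Matrix.trace (woottersF d q p * woottersF d q' p') = 0 := by
  haveI : Fact d.Prime := ⟨hp⟩
  rw [trace_eq d hp ho]
  by_cases hq : q = q'
  · rw [if_pos hq]
    subst hq
    have hpp : p ≠ p' := fun h' => h (by rw [h'])
    have ht : (2 : ZMod d) * (p' - p) ≠ 0 :=
      mul_ne_zero (two_ne d hp ho) (sub_ne_zero.2 (Ne.symm hpp))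
    rw [sum_E_mul_eq_zero d hp _ ht, mul_zero]
  · rw [if_neg hq]

lemma trace_self (hp : d.Prime) (ho : Odd d) (q p : ZMod d) :
    Matrix.trace (woottersF d q p * woottersF d q p) = ((d : ℂ) ^ 3)⁻¹ := by
  rw [trace_eq d hp ho, if_pos rfl]
  have h1 : ∀ j : ZMod d, E d (2 * (p - p) * j) = 1 := fun j => by
    rw [show (2 : ZMod d) * (p - p) * j = 0 by ring, E_zero]
  simp_rw [h1]
  rw [show (2 : ZMod d) * q * p - 2 * q * p = 0 by ring, E_zero]
  rw [Finset.sum_const, Finset.card_univ, ZMod.card, nsmul_eq_mul, mul_one]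
  have hdc : (d : ℂ) ≠ 0 := hd0 d
  field_simp

lemma li_C (hp : d.Prime) (ho : Odd d) :
    LinearIndependent ℂ (fun qp : ZMod d × ZMod d => woottersF d qp.1 qp.2) := by
  rw [Fintype.linearIndependent_iff]
  intro g hg i
  have h0 : Matrix.trace ((∑ j : ZMod d × ZMod d, g j • woottersF d j.1 j.2)
      * woottersF d i.1 i.2) = 0 := by
    rw [hg, Matrix.zero_mul, Matrix.trace_zero]
  rw [Finset.sum_mul] at h0
  simp_rw [Matrix.smul_mul] at h0
  rw [Matrix.trace_sum] at h0
  simp_rw [Matrix.trace_smul, smul_eq_mul] at h0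
  rw [Finset.sum_eq_single i] at h0
  · rw [trace_self d hp ho] at h0
    rcases mul_eq_zero.1 h0 with h | h
    · exact h
    · exact absurd h (inv_ne_zero (pow_ne_zero 3 (hd0 d)))
  · intro j _ hji
    rw [trace_orth d hp ho j.1 j.2 i.1 i.2 (by simpa using hji), mul_zero]
  · intro hi
    exact absurd (Finset.mem_univ i) hi

end Stmt13Aux

open Stmt13Aux in
theorem stmt13 (d : ℕ) [NeZero d] (hprime : d.Prime) (hodd : Odd d) :
    (∀ q p : ZMod d, (woottersF d q p).IsHermitian) ∧
    (∀ q p q' p' : ZMod d, (q, p) ≠ (q', p') →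
      Matrix.trace (woottersF d q p * woottersF d q' p') = 0) ∧
    LinearIndependent ℝ (fun qp : ZMod d × ZMod d => woottersF d qp.1 qp.2) ∧
    (∀ A : Matrix (ZMod d) (ZMod d) ℂ, A.IsHermitian →
      A ∈ Submodule.span ℝ (Set.range fun qp : ZMod d × ZMod d => woottersF d qp.1 qp.2)) := by
  haveI : Fact d.Prime := ⟨hprime⟩
  refine ⟨hermitian d, trace_orth d hprime hodd, ?_, ?_⟩
  · refine LinearIndependent.restrict_scalars (R := ℝ) ?_ (li_C d hprime hodd)
    intro a b hab
    simpa using hab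
  · intro A hA
    have card_eq : Fintype.card (ZMod d × ZMod d)
        = Module.finrank ℂ (Matrix (ZMod d) (ZMod d) ℂ) := by
      rw [Module.finrank_matrix, Fintype.card_prod, ZMod.card, Module.finrank_self, mul_one]
    set v : ZMod d × ZMod d → Matrix (ZMod d) (ZMod d) ℂ :=
      fun qp => woottersF d qp.1 qp.2 with hv
    let B := basisOfLinearIndependentOfCardEqFinrank (li_C d hprime hodd) card_eq
    have hB : ⇑B = v := coe_basisOfLinearIndependentOfCardEqFinrank _ _
    have hrepr : ∑ i : ZMod d × ZMod d, B.repr A i • v i = A := by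
      rw [← hB]
      exact B.sum_repr A
    have hconj : ∀ i : ZMod d × ZMod d, (starRingEnd ℂ) (B.repr A i) = B.repr A i := by
      have hsum0 : ∑ i : ZMod d × ZMod d,
          ((starRingEnd ℂ) (B.repr A i) - B.repr A i) • v i = 0 := by
        have hAH : A = ∑ i : ZMod d × ZMod d, (starRingEnd ℂ) (B.repr A i) • v i := by
          conv_lhs => rw [← hA, ← hrepr]
          rw [Matrix.conjTranspose_sum]
          refine Finset.sum_congr rfl fun i _ => ?_
          rw [Matrix.conjTranspose_smul]
          simp only [hv]
          rw [hermitian d i.1 i.2]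
          rfl
        simp_rw [sub_smul]
        rw [Finset.sum_sub_distrib, ← hAH, hrepr, sub_self]
      intro i
      have := Fintype.linearIndependent_iff.1 (li_C d hprime hodd) _ hsum0 i
      exact sub_eq_zero.1 this
    have hmem : ∀ i : ZMod d × ZMod d,
        v i ∈ Submodule.span ℝ (Set.range v) :=
      fun i => Submodule.subset_span ⟨i, rfl⟩
    rw [← hrepr]
    apply Submodule.sum_mem
    intro i _
    have hre : B.repr A i = ((B.repr A i).re : ℂ) := (Complex.conj_eq_iff_re.1 (hconj i)).symm
    rw [hre, show (((B.repr A i).re : ℂ)) • v i = (B.repr A i).re • v i from by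
      rw [← IsScalarTower.algebraMap_smul ℂ ((B.repr A i).re) (v i)]; rfl]
    exact Submodule.smul_mem _ _ (hmem i)
end
end

section
/- For d ≥ 2, there exists no map from density matrices on ℂ^d and POVMs on ℂ^d to a classical probability model over a finite set Γ that is of the 'positive frame and positive dual' form: i.e., there are no families F, E : Γ → Herm(ℂ^d) of positive semidefinite operators with E dual to F such that tr(ρ M) = Σ_α tr(F(α)ρ) tr(E(α)M) holds for all Hermitian ρ, M. -/
open ComplexOrder
open Matrix

namespace Stmt15Aux

variable {d : ℕ}

/-- rank-one matrix v vᴴ -/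
def R (v : Fin d → ℂ) : Matrix (Fin d) (Fin d) ℂ :=
  Matrix.of fun i j => v i * star (v j)

lemma R_isHermitian (v : Fin d → ℂ) : (R v).IsHermitian := by
  ext i j
  simp [R, Matrix.conjTranspose_apply, mul_comm]

lemma trace_mul_R (A : Matrix (Fin d) (Fin d) ℂ) (v : Fin d → ℂ) :
    Matrix.trace (A * R v) = star v ⬝ᵥ A *ᵥ v := by
  simp only [Matrix.trace, Matrix.diag_apply, Matrix.mul_apply, R, Matrix.of_apply,
    dotProduct, Matrix.mulVec, Pi.star_apply, Finset.mul_sum]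
  refine Finset.sum_congr rfl fun i _ => Finset.sum_congr rfl fun j _ => by ring

lemma trace_R_mul_R (v w : Fin d → ℂ) :
    Matrix.trace (R v * R w) = (star v ⬝ᵥ w) * (star w ⬝ᵥ v) := by
  rw [trace_mul_R]
  have hmv : R v *ᵥ w = (star v ⬝ᵥ w) • v := by
    ext i
    simp only [R, Matrix.mulVec, dotProduct, Matrix.of_apply, Pi.smul_apply,
      smul_eq_mul, Pi.star_apply, Finset.sum_mul]
    refine Finset.sum_congr rfl fun j _ => by ring
  rw [hmv, dotProduct_smul, smul_eq_mul]

/-- cross-term symmetry for Hermitian matrices -/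
lemma herm_cross {A : Matrix (Fin d) (Fin d) ℂ} (hA : A.IsHermitian)
    (v w : Fin d → ℂ) : star v ⬝ᵥ A *ᵥ w = star (star w ⬝ᵥ A *ᵥ v) := by
  have hA' : ∀ i j : Fin d, star (A i j) = A j i := by
    intro i j
    have := congrFun (congrFun hA j) i
    simpa [Matrix.conjTranspose_apply] using this
  simp only [dotProduct, Matrix.mulVec, Pi.star_apply, star_sum, star_mul',
    star_star, Finset.mul_sum]
  rw [Finset.sum_comm]
  refine Finset.sum_congr rfl fun i _ => Finset.sum_congr rfl fun j _ => ?_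
  rw [← hA' i j]
  ring

end Stmt15Aux

open Stmt15Aux

theorem stmt15 {d : ℕ} (hd : 2 ≤ d) {Γ : Type*} [Fintype Γ] :
    ¬ ∃ F E : Γ → Matrix (Fin d) (Fin d) ℂ,
        (∀ α, (F α).PosSemidef) ∧ (∀ α, (E α).PosSemidef) ∧
        ∀ ρ M : Matrix (Fin d) (Fin d) ℂ, ρ.IsHermitian → M.IsHermitian →
          Matrix.trace (ρ * M) =
            ∑ α, Matrix.trace (F α * ρ) * Matrix.trace (E α * M) := by
  rintro ⟨F, E, hF, hE, h⟩
  have hkey : ∀ v w : Fin d → ℂ,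
      (star v ⬝ᵥ w) * (star w ⬝ᵥ v) =
        ∑ α, (star v ⬝ᵥ F α *ᵥ v) * (star w ⬝ᵥ E α *ᵥ w) := by
    intro v w
    have hh := h (R v) (R w) (R_isHermitian v) (R_isHermitian w)
    rw [trace_R_mul_R] at hh
    simpa only [trace_mul_R] using hh
  set i0 : Fin d := ⟨0, by omega⟩ with hi0
  set i1 : Fin d := ⟨1, by omega⟩ with hi1
  have hne : i0 ≠ i1 := by simp [hi0, hi1, Fin.ext_iff]
  set x : Fin d → ℂ := Pi.single i0 1 with hx
  set y : Fin d → ℂ := Pi.single i1 1 with hy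
  have hxx : star x ⬝ᵥ x = 1 := by
    simp [hx, dotProduct, Pi.single_apply, apply_ite (star : ℂ → ℂ)]
  have hyy : star y ⬝ᵥ y = 1 := by
    simp [hy, dotProduct, Pi.single_apply, apply_ite (star : ℂ → ℂ)]
  have hxy : star x ⬝ᵥ y = 0 := by
    simp [hx, hy, dotProduct, Pi.single_apply, apply_ite (star : ℂ → ℂ), hne.symm]
  have hyx : star y ⬝ᵥ x = 0 := by
    simp [hx, hy, dotProduct, Pi.single_apply, apply_ite (star : ℂ → ℂ), hne]
  set z : Fin d → ℂ := x + y with hz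
  set w : Fin d → ℂ := x - y with hw
  have hstarz : star z = star x + star y := by simp [hz]
  have hstarw : star w = star x - star y := by simp [hw]
  have hzw : star z ⬝ᵥ w = 0 := by
    rw [hstarz, hw, add_dotProduct, dotProduct_sub, dotProduct_sub,
      hxx, hyy, hxy, hyx]
    ring
  have hwz : star w ⬝ᵥ z = 0 := by
    rw [hstarw, hz, sub_dotProduct, dotProduct_add, dotProduct_add,
      hxx, hyy, hxy, hyx]
    ring
  -- nonnegativity of all quadratic forms
  have nnF : ∀ (α : Γ) (v : Fin d → ℂ), 0 ≤ star v ⬝ᵥ F α *ᵥ v := fun α v => (hF α).dotProduct_mulVec_nonneg v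
  have nnE : ∀ (α : Γ) (v : Fin d → ℂ), 0 ≤ star v ⬝ᵥ E α *ᵥ v := fun α v => (hE α).dotProduct_mulVec_nonneg v
  -- zero-sum instances give termwise zero
  have termzero : ∀ v w' : Fin d → ℂ, (star v ⬝ᵥ w') * (star w' ⬝ᵥ v) = 0 →
      ∀ α, (star v ⬝ᵥ F α *ᵥ v) * (star w' ⬝ᵥ E α *ᵥ w') = 0 := by
    intro v w' h0 α
    have hsum : ∑ β, (star v ⬝ᵥ F β *ᵥ v) * (star w' ⬝ᵥ E β *ᵥ w') = 0 := by
      rw [← hkey, h0]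
    have := (Finset.sum_eq_zero_iff_of_nonneg
      (fun β _ => mul_nonneg (nnF β v) (nnE β w'))).mp hsum
    exact this α (Finset.mem_univ α)
  -- pick a witness α with f_α(x) e_α(x) ≠ 0
  have h0 : ∑ α, (star x ⬝ᵥ F α *ᵥ x) * (star x ⬝ᵥ E α *ᵥ x) = 1 := by
    have := hkey x x
    rw [hxx] at this
    linear_combination -this
  obtain ⟨α, -, hα⟩ := Finset.exists_ne_zero_of_sum_ne_zero
    (h0 ▸ one_ne_zero : ∑ α, (star x ⬝ᵥ F α *ᵥ x) * (star x ⬝ᵥ E α *ᵥ x) ≠ 0)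
  have ha : star x ⬝ᵥ F α *ᵥ x ≠ 0 := fun hh => hα (by rw [hh, zero_mul])
  have ha' : star x ⬝ᵥ E α *ᵥ x ≠ 0 := fun hh => hα (by rw [hh, mul_zero])
  -- e_α(y) = 0 hence E α *ᵥ y = 0
  have h1 := termzero x y (by rw [hxy, zero_mul]) α
  have hEy : E α *ᵥ y = 0 := by
    have : star y ⬝ᵥ E α *ᵥ y = 0 := by
      rcases mul_eq_zero.mp h1 with hc | hc
      · exact absurd hc ha
      · exact hc
    exact ((hE α).dotProduct_mulVec_zero_iff y).mp this
  -- e_α(z) = e_α(w) = e_α(x)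
  have hcross : star y ⬝ᵥ E α *ᵥ x = 0 := by
    rw [herm_cross (hE α).1 y x, hEy]
    simp
  have hEz : star z ⬝ᵥ E α *ᵥ z = star x ⬝ᵥ E α *ᵥ x := by
    rw [hz, hstarz, Matrix.mulVec_add, hEy, add_zero, add_dotProduct, hcross, add_zero]
  have hEw : star w ⬝ᵥ E α *ᵥ w = star x ⬝ᵥ E α *ᵥ x := by
    rw [hw, hstarw, Matrix.mulVec_sub, hEy, sub_zero, sub_dotProduct, hcross, sub_zero]
  -- f_α(z) = f_α(w) = 0
  have h3 := termzero z w (by rw [hzw, zero_mul]) α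
  have h4 := termzero w z (by rw [hwz, zero_mul]) α
  have hFz : star z ⬝ᵥ F α *ᵥ z = 0 := by
    rcases mul_eq_zero.mp h3 with hc | hc
    · exact hc
    · rw [hEw] at hc; exact absurd hc ha'
  have hFw : star w ⬝ᵥ F α *ᵥ w = 0 := by
    rcases mul_eq_zero.mp h4 with hc | hc
    · exact hc
    · rw [hEz] at hc; exact absurd hc ha'
  -- parallelogram identity for F α
  have hpar : star z ⬝ᵥ F α *ᵥ z + star w ⬝ᵥ F α *ᵥ w =
      2 * (star x ⬝ᵥ F α *ᵥ x) + 2 * (star y ⬝ᵥ F α *ᵥ y) := by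
    rw [hz, hw, hstarz, hstarw, Matrix.mulVec_add, Matrix.mulVec_sub,
      add_dotProduct, sub_dotProduct, dotProduct_add,
      dotProduct_add, dotProduct_sub, dotProduct_sub]
    ring
  rw [hFz, hFw] at hpar
  -- conclude f_α(x) = 0, contradiction
  have hb : (0:ℂ) ≤ star y ⬝ᵥ F α *ᵥ y := nnF α y
  have haa : (0:ℂ) ≤ star x ⬝ᵥ F α *ᵥ x := nnF α x
  have hsum0 : star x ⬝ᵥ F α *ᵥ x + star y ⬝ᵥ F α *ᵥ y = 0 := by
    have h2 : (2:ℂ) ≠ 0 := two_ne_zero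
    field_simp at hpar
    linear_combination -hpar / 2
  have hle : star x ⬝ᵥ F α *ᵥ x ≤ 0 := by
    calc star x ⬝ᵥ F α *ᵥ x ≤ star x ⬝ᵥ F α *ᵥ x + star y ⬝ᵥ F α *ᵥ y :=
          le_add_of_nonneg_right hb
      _ = 0 := hsum0
  exact ha (le_antisymm hle haa)
end

section
/- Let F : Γ → Herm(ℂ^d) with d ≥ 2 be a finite family of positive semidefinite operators spanning Herm(ℂ^d), and E any dual frame. Then there exists α ∈ Γ and a positive semidefinite operator M (an effect, 0 ≤ M ≤ I) such that tr(E(α) M) < 0; i.e., some conditional quasi-probability is negative. -/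
open ComplexOrder

namespace Stmt16Aux

open Matrix

variable {d : ℕ}

lemma vv_herm (x : Fin d → ℂ) : (Matrix.vecMulVec x (star x)).IsHermitian := by
  ext i j
  simp [Matrix.conjTranspose_apply, Matrix.vecMulVec_apply, mul_comm]

lemma vv_mulVec (x y v : Fin d → ℂ) : Matrix.vecMulVec x y *ᵥ v = (y ⬝ᵥ v) • x := by
  ext i
  simp only [Matrix.mulVec, dotProduct, Matrix.vecMulVec_apply, Pi.smul_apply,
    smul_eq_mul, Finset.sum_mul]
  exact Finset.sum_congr rfl fun j _ => by ring

lemma vv_mul (x y z w : Fin d → ℂ) :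
    Matrix.vecMulVec x y * Matrix.vecMulVec z w = (y ⬝ᵥ z) • Matrix.vecMulVec x w := by
  ext i j
  simp only [Matrix.mul_apply, Matrix.vecMulVec_apply, Matrix.smul_apply, dotProduct,
    smul_eq_mul, Finset.sum_mul]
  exact Finset.sum_congr rfl fun k _ => by ring

lemma trace_mul_vv (A : Matrix (Fin d) (Fin d) ℂ) (x : Fin d → ℂ) :
    Matrix.trace (A * Matrix.vecMulVec x (star x)) = star x ⬝ᵥ A *ᵥ x := by
  simp only [Matrix.trace, Matrix.diag_apply, Matrix.mul_apply, Matrix.vecMulVec_apply,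
    dotProduct, Matrix.mulVec, Pi.star_apply, Finset.mul_sum]
  exact Finset.sum_congr rfl fun i _ => Finset.sum_congr rfl fun j _ => by ring

lemma herm_quad_star {A : Matrix (Fin d) (Fin d) ℂ} (hA : A.IsHermitian) (v : Fin d → ℂ) :
    star (star v ⬝ᵥ A *ᵥ v) = star v ⬝ᵥ A *ᵥ v := by
  simp only [dotProduct, Matrix.mulVec, Pi.star_apply, star_sum, star_mul', star_star,
    Finset.mul_sum]
  rw [Finset.sum_comm]
  refine Finset.sum_congr rfl fun i _ => Finset.sum_congr rfl fun j _ => ?_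
  rw [← hA.apply i j]
  ring

lemma sum_mulVec {ι : Type*} (s : Finset ι) (A : ι → Matrix (Fin d) (Fin d) ℂ)
    (v : Fin d → ℂ) : (∑ β ∈ s, A β) *ᵥ v = ∑ β ∈ s, A β *ᵥ v := by
  ext i
  simp only [Matrix.mulVec, dotProduct, Matrix.sum_apply, Finset.sum_apply,
    Finset.sum_mul]
  exact Finset.sum_comm

lemma dotProduct_sum {ι : Type*} (s : Finset ι) (v : Fin d → ℂ) (w : ι → Fin d → ℂ) :
    v ⬝ᵥ (∑ β ∈ s, w β) = ∑ β ∈ s, v ⬝ᵥ w β := by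
  simp only [dotProduct, Finset.sum_apply, Finset.mul_sum]
  exact Finset.sum_comm

end Stmt16Aux

open Matrix

theorem stmt16 {d : ℕ} (hd : 2 ≤ d) {Γ : Type*} [Fintype Γ]
    (F E : Γ → Matrix (Fin d) (Fin d) ℂ)
    (hFpos : ∀ α, (F α).PosSemidef)
    (hFspan : ∀ A : Matrix (Fin d) (Fin d) ℂ, A.IsHermitian →
      A ∈ Submodule.span ℝ (Set.range F))
    (hEh : ∀ α, (E α).IsHermitian)
    (hdual : ∀ A : Matrix (Fin d) (Fin d) ℂ, A.IsHermitian →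
      A = ∑ α, Matrix.trace (F α * A) • E α) :
    ∃ (α : Γ) (M : Matrix (Fin d) (Fin d) ℂ),
      M.PosSemidef ∧ (1 - M).PosSemidef ∧ (Matrix.trace (E α * M)).re < 0 := by
  classical
  by_contra hcon
  push_neg at hcon
  -- Step A: all quadratic forms of E are nonnegative
  have hEq : ∀ (α : Γ) (v : Fin d → ℂ), 0 ≤ star v ⬝ᵥ E α *ᵥ v := by
    intro α v
    rcases eq_or_ne v 0 with rfl | hv
    · simp
    have him := Stmt16Aux.herm_quad_star (hEh α) v
    set r : ℝ := ∑ i, Complex.normSq (v i) with hr_def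
    have hr : 0 < r := by
      have hex : ∃ i, v i ≠ 0 := by
        by_contra h; push_neg at h; exact hv (funext h)
      obtain ⟨i, hi⟩ := hex
      exact Finset.sum_pos' (fun _ _ => Complex.normSq_nonneg _)
        ⟨i, Finset.mem_univ i, Complex.normSq_pos.2 hi⟩
    set t : ℝ := (Real.sqrt r)⁻¹ with ht_def
    have htpos : 0 < t := inv_pos.2 (Real.sqrt_pos.2 hr)
    set u : Fin d → ℂ := (t : ℂ) • v with hu_def
    have hsu : star u = (t : ℂ) • star v := by
      ext i
      simp [hu_def, Complex.star_def, Complex.conj_ofReal]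
    have hvv : star v ⬝ᵥ v = (r : ℂ) := by
      rw [hr_def]
      push_cast
      simp only [dotProduct, Pi.star_apply]
      exact Finset.sum_congr rfl fun i _ => by
        rw [Complex.star_def, mul_comm, Complex.mul_conj]
    have httr : t * (t * r) = 1 := by
      rw [← mul_assoc, ht_def, ← mul_inv, Real.mul_self_sqrt hr.le]
      exact inv_mul_cancel₀ hr.ne'
    have huu : star u ⬝ᵥ u = 1 := by
      rw [hsu, hu_def, smul_dotProduct, dotProduct_smul, hvv, smul_eq_mul,
        smul_eq_mul]
      exact_mod_cast httr
    set M : Matrix (Fin d) (Fin d) ℂ := Matrix.vecMulVec u (star u) with hM_def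
    have hMherm : M.IsHermitian := Stmt16Aux.vv_herm u
    have hMM : M * M = M := by
      rw [hM_def, Stmt16Aux.vv_mul, huu, one_smul]
    have hMpsd : M.PosSemidef := by
      have h1 : Mᴴ * M = M := by rw [hMherm.eq, hMM]
      exact h1 ▸ Matrix.posSemidef_conjTranspose_mul_self M
    have h1Mpsd : (1 - M).PosSemidef := by
      have h1h : (1 - M)ᴴ = 1 - M := by
        rw [Matrix.conjTranspose_sub, Matrix.conjTranspose_one, hMherm.eq]
      have h1 : (1 - M)ᴴ * (1 - M) = 1 - M := by
        rw [h1h, sub_mul, one_mul, mul_sub, mul_one, hMM, sub_self, sub_zero]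
      exact h1 ▸ Matrix.posSemidef_conjTranspose_mul_self (1 - M)
    have hge := hcon α M hMpsd h1Mpsd
    rw [hM_def, Stmt16Aux.trace_mul_vv] at hge
    have hqu : star u ⬝ᵥ E α *ᵥ u = ((t : ℂ) * (t : ℂ)) * (star v ⬝ᵥ E α *ᵥ v) := by
      rw [hsu, hu_def, smul_dotProduct, Matrix.mulVec_smul, dotProduct_smul,
        smul_eq_mul, smul_eq_mul]
      ring
    have hre : 0 ≤ (star v ⬝ᵥ E α *ᵥ v).re := by
      rw [hqu] at hge
      have : ((t : ℂ) * (t : ℂ) * (star v ⬝ᵥ E α *ᵥ v)).re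
          = (t * t) * (star v ⬝ᵥ E α *ᵥ v).re := by
        rw [← Complex.ofReal_mul, Complex.re_ofReal_mul]
      rw [this] at hge
      nlinarith
    have him0 : (star v ⬝ᵥ E α *ᵥ v).im = 0 := by
      have := him
      rw [Complex.star_def, Complex.conj_eq_iff_im] at this
      exact this
    rw [Complex.le_def]
    exact ⟨by simpa using hre, by simp [him0]⟩
  have hEpsd : ∀ α, (E α).PosSemidef := fun α => Matrix.PosSemidef.of_dotProduct_mulVec_nonneg (hEh α) (hEq α)
  -- Step B: key orthogonality relation
  have key : ∀ x y : Fin d → ℂ, star x ⬝ᵥ y = 0 → ∀ β,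
      (star x ⬝ᵥ F β *ᵥ x) * (star y ⬝ᵥ E β *ᵥ y) = 0 := by
    intro x y hxy
    have hA := hdual (Matrix.vecMulVec x (star x)) (Stmt16Aux.vv_herm x)
    have h0 : star y ⬝ᵥ (Matrix.vecMulVec x (star x)) *ᵥ y = 0 := by
      rw [Stmt16Aux.vv_mulVec, hxy, zero_smul, dotProduct_zero]
    have hsum : (0 : ℂ) = ∑ β, (star x ⬝ᵥ F β *ᵥ x) * (star y ⬝ᵥ E β *ᵥ y) := by
      calc (0 : ℂ) = star y ⬝ᵥ (Matrix.vecMulVec x (star x)) *ᵥ y := h0.symm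
        _ = star y ⬝ᵥ (∑ β, Matrix.trace (F β * Matrix.vecMulVec x (star x)) • E β) *ᵥ y := by
            rw [← hA]
        _ = ∑ β, (star x ⬝ᵥ F β *ᵥ x) * (star y ⬝ᵥ E β *ᵥ y) := by
            rw [Stmt16Aux.sum_mulVec, Stmt16Aux.dotProduct_sum]
            exact Finset.sum_congr rfl fun β _ => by
              rw [Matrix.smul_mulVec, dotProduct_smul, smul_eq_mul,
                Stmt16Aux.trace_mul_vv]
    intro β
    exact (Finset.sum_eq_zero_iff_of_nonneg
      (fun β _ => mul_nonneg ((hFpos β).dotProduct_mulVec_nonneg x) (hEq β y))).1 hsum.symm β (Finset.mem_univ β)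
  -- kernel lemma
  have KE : ∀ β (x : Fin d → ℂ), star x ⬝ᵥ F β *ᵥ x ≠ 0 →
      ∀ y : Fin d → ℂ, star x ⬝ᵥ y = 0 → E β *ᵥ y = 0 := by
    intro β x hx y hxy
    have hk := key x y hxy β
    rcases mul_eq_zero.1 hk with h | h
    · exact absurd h hx
    · exact ((hEpsd β).dotProduct_mulVec_zero_iff y).1 h
  -- Step C: every term in the decomposition of 1 vanishes
  have hzero : ∀ β, Matrix.trace (F β * 1) • E β = 0 := by
    intro β
    rcases eq_or_ne (F β) 0 with hF0 | hF0
    · simp [hF0]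
    -- find a diagonal entry with positive quadratic form
    have hFd : ∃ i : Fin d,
        star (Pi.single i 1 : Fin d → ℂ) ⬝ᵥ F β *ᵥ (Pi.single i 1) ≠ 0 := by
      by_contra h
      push_neg at h
      apply hF0
      ext i j
      have h1 := ((hFpos β).dotProduct_mulVec_zero_iff (Pi.single j 1)).1 (h j)
      have h2 := congrFun h1 i
      simpa using h2
    obtain ⟨i, hi⟩ := hFd
    haveI : Nontrivial (Fin d) := Fin.nontrivial_iff_two_le.mpr hd
    obtain ⟨j, hj⟩ := exists_ne i
    set ei : Fin d → ℂ := Pi.single i 1 with hei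
    set ej : Fin d → ℂ := Pi.single j 1 with hej
    have hsei : star ei = ei := by
      ext k; simp [hei, Pi.single_apply, apply_ite]
    have hsej : star ej = ej := by
      ext k; simp [hej, Pi.single_apply, apply_ite]
    have heiej : ei ⬝ᵥ ej = 0 := by
      simp [hei, hej, dotProduct, Pi.single_apply, hj]
    have hejei : ej ⬝ᵥ ei = 0 := by
      simp [hei, hej, dotProduct, Pi.single_apply, hj.symm, Ne.symm hj]
    have heiei : ei ⬝ᵥ ei = 1 := by
      simp [hei, dotProduct, Pi.single_apply]
    have hejej : ej ⬝ᵥ ej = 1 := by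
      simp [hej, dotProduct, Pi.single_apply]
    -- E β kills all basis vectors other than e i
    have hEk : ∀ k ≠ i, E β *ᵥ (Pi.single k 1 : Fin d → ℂ) = 0 := by
      intro k hk
      refine KE β ei hi _ ?_
      rw [hsei]
      simp [hei, dotProduct, Pi.single_apply, hk, Ne.symm hk]
    -- find t ∈ {1, 2} with positive quadratic form at ei + t • ej
    have hgood : ∃ t : ℂ, t ≠ 0 ∧ star t = t ∧
        star (ei + t • ej) ⬝ᵥ F β *ᵥ (ei + t • ej) ≠ 0 := by
      by_contra h
      push_neg at h
      have k1 : F β *ᵥ (ei + (1 : ℂ) • ej) = 0 :=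
        ((hFpos β).dotProduct_mulVec_zero_iff _).1 (h 1 one_ne_zero (by simp))
      have k2 : F β *ᵥ (ei + (2 : ℂ) • ej) = 0 :=
        ((hFpos β).dotProduct_mulVec_zero_iff _).1 (h 2 two_ne_zero (by simp))
      have kj : F β *ᵥ ej = 0 := by
        have hdiff : ej = (ei + (2 : ℂ) • ej) - (ei + (1 : ℂ) • ej) := by
          ext k
          simp only [Pi.sub_apply, Pi.add_apply, Pi.smul_apply, smul_eq_mul]
          ring
        rw [hdiff, Matrix.mulVec_sub, k1, k2, sub_zero]
      have ki : F β *ᵥ ei = 0 := by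
        have hk := k1
        rw [Matrix.mulVec_add, Matrix.mulVec_smul, kj, smul_zero, add_zero] at hk
        exact hk
      apply hi
      rw [hsei, ki, dotProduct_zero]
    obtain ⟨t, ht0, htstar, htq⟩ := hgood
    -- orthogonal vector to ei + t ej : t • ei - ej
    have horth : star (ei + t • ej) ⬝ᵥ (t • ei - ej) = 0 := by
      rw [star_add, star_smul, hsei, hsej, htstar]
      rw [add_dotProduct, smul_dotProduct, dotProduct_sub,
        dotProduct_sub, dotProduct_smul, dotProduct_smul,
        heiei, heiej, hejei, hejej]
      simp
    have hEy : E β *ᵥ (t • ei - ej) = 0 := KE β _ htq _ horth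
    have hEj : E β *ᵥ ej = 0 := hEk j hj
    have hEi : E β *ᵥ ei = 0 := by
      rw [Matrix.mulVec_sub, Matrix.mulVec_smul, hEj, sub_zero] at hEy
      have := smul_eq_zero.1 hEy
      rcases this with h | h
      · exact absurd h ht0
      · exact h
    have hE0 : E β = 0 := by
      ext k l
      rcases eq_or_ne l i with rfl | hl
      · have := congrFun hEi k
        simpa [hei] using this
      · have := congrFun (hEk l hl) k
        simpa using this
    rw [hE0, smul_zero]
  -- Step D: contradiction from the decomposition of the identity
  have h1d := hdual 1 Matrix.isHermitian_one
  rw [Finset.sum_congr rfl fun β _ => hzero β, Finset.sum_const, smul_zero] at h1d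
  have i0 : Fin d := ⟨0, by omega⟩
  have hcontr := congrFun (congrFun h1d i0) i0
  simp [Matrix.one_apply] at hcontr
end
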